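/- There is a surjective algebra homomorphism from the cubic Yang-Mills algebra A (s = 3, Euclidean metric) onto the quadratic self-duality algebra A^{(+)} sending generators to generators. -/
import Mathlib


noncomputable section

open FreeAlgebra

section keylemmas

variable {R : Type*} [Ring R]

lemma ym_key0 (a0 a1 a2 a3 : R)
    (h1 : a0*a1 - a1*a0 = a2*a3 - a3*a2)
    (h2 : a0*a2 - a2*a0 = a3*a1 - a1*a3)
    (h3 : a0*a3 - a3*a0 = a1*a2 - a2*a1) :
    (a0*(a0*a0 - a0*a0) - (a0*a0 - a0*a0)*a0)
    + (a1*(a1*a0 - a0*a1) - (a1*a0 - a0*a1)*a1)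
    + (a2*(a2*a0 - a0*a2) - (a2*a0 - a0*a2)*a2)
    + (a3*(a3*a0 - a0*a3) - (a3*a0 - a0*a3)*a3) = 0 := by
  linear_combination (norm := noncomm_ring)
    (h1*a1 - a1*h1) + (h2*a2 - a2*h2) + (h3*a3 - a3*h3)

lemma ym_key1 (a0 a1 a2 a3 : R)
    (h1 : a0*a1 - a1*a0 = a2*a3 - a3*a2)
    (h2 : a0*a2 - a2*a0 = a3*a1 - a1*a3)
    (h3 : a0*a3 - a3*a0 = a1*a2 - a2*a1) :
    (a0*(a0*a1 - a1*a0) - (a0*a1 - a1*a0)*a0)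
    + (a1*(a1*a1 - a1*a1) - (a1*a1 - a1*a1)*a1)
    + (a2*(a2*a1 - a1*a2) - (a2*a1 - a1*a2)*a2)
    + (a3*(a3*a1 - a1*a3) - (a3*a1 - a1*a3)*a3) = 0 := by
  linear_combination (norm := noncomm_ring)
    (a0*h1 - h1*a0) + (a2*h3 - h3*a2) - (a3*h2 - h2*a3)

lemma ym_key2 (a0 a1 a2 a3 : R)
    (h1 : a0*a1 - a1*a0 = a2*a3 - a3*a2)
    (h2 : a0*a2 - a2*a0 = a3*a1 - a1*a3)
    (h3 : a0*a3 - a3*a0 = a1*a2 - a2*a1) :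
    (a0*(a0*a2 - a2*a0) - (a0*a2 - a2*a0)*a0)
    + (a1*(a1*a2 - a2*a1) - (a1*a2 - a2*a1)*a1)
    + (a2*(a2*a2 - a2*a2) - (a2*a2 - a2*a2)*a2)
    + (a3*(a3*a2 - a2*a3) - (a3*a2 - a2*a3)*a3) = 0 := by
  linear_combination (norm := noncomm_ring)
    (a0*h2 - h2*a0) - (a1*h3 - h3*a1) + (a3*h1 - h1*a3)

lemma ym_key3 (a0 a1 a2 a3 : R)
    (h1 : a0*a1 - a1*a0 = a2*a3 - a3*a2)
    (h2 : a0*a2 - a2*a0 = a3*a1 - a1*a3)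
    (h3 : a0*a3 - a3*a0 = a1*a2 - a2*a1) :
    (a0*(a0*a3 - a3*a0) - (a0*a3 - a3*a0)*a0)
    + (a1*(a1*a3 - a3*a1) - (a1*a3 - a3*a1)*a1)
    + (a2*(a2*a3 - a3*a2) - (a2*a3 - a3*a2)*a2)
    + (a3*(a3*a3 - a3*a3) - (a3*a3 - a3*a3)*a3) = 0 := by
  linear_combination (norm := noncomm_ring)
    (a0*h3 - h3*a0) + (a1*h2 - h2*a1) - (a2*h1 - h1*a2)

end keylemmas

/-- The relations of the cubic Yang-Mills algebra for `s = 3` with the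
Euclidean metric: `Σ_μ [∇_μ,[∇_μ,∇_ν]] = 0` for all `ν`. -/
def ym4Rel : FreeAlgebra ℂ (Fin 4) → FreeAlgebra ℂ (Fin 4) → Prop :=
  fun x y => (∃ ν : Fin 4,
    x = ∑ μ : Fin 4,
      (ι ℂ μ * (ι ℂ μ * ι ℂ ν - ι ℂ ν * ι ℂ μ)
        - (ι ℂ μ * ι ℂ ν - ι ℂ ν * ι ℂ μ) * ι ℂ μ)) ∧ y = 0

/-- The 4-dimensional Euclidean Yang-Mills algebra. -/
def YM4 : Type := RingQuot ym4Rel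

instance : Ring YM4 := by unfold YM4; infer_instance
instance : Algebra ℂ YM4 := by unfold YM4; infer_instance

/-- The relations of the quadratic self-duality algebra:
`[∇_0,∇_k] = [∇_ℓ,∇_m]` for every cyclic permutation `(k,ℓ,m)` of `(1,2,3)`. -/
def sdRel : FreeAlgebra ℂ (Fin 4) → FreeAlgebra ℂ (Fin 4) → Prop :=
  fun x y =>
    (x = ι ℂ (0 : Fin 4) * ι ℂ (1 : Fin 4) - ι ℂ (1 : Fin 4) * ι ℂ (0 : Fin 4) ∧
     y = ι ℂ (2 : Fin 4) * ι ℂ (3 : Fin 4) - ι ℂ (3 : Fin 4) * ι ℂ (2 : Fin 4)) ∨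
    (x = ι ℂ (0 : Fin 4) * ι ℂ (2 : Fin 4) - ι ℂ (2 : Fin 4) * ι ℂ (0 : Fin 4) ∧
     y = ι ℂ (3 : Fin 4) * ι ℂ (1 : Fin 4) - ι ℂ (1 : Fin 4) * ι ℂ (3 : Fin 4)) ∨
    (x = ι ℂ (0 : Fin 4) * ι ℂ (3 : Fin 4) - ι ℂ (3 : Fin 4) * ι ℂ (0 : Fin 4) ∧
     y = ι ℂ (1 : Fin 4) * ι ℂ (2 : Fin 4) - ι ℂ (2 : Fin 4) * ι ℂ (1 : Fin 4))

/-- The quadratic self-duality algebra `A⁽⁺⁾`. -/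
def SD : Type := RingQuot sdRel

instance : Ring SD := by unfold SD; infer_instance
instance : Algebra ℂ SD := by unfold SD; infer_instance

lemma sd_respects : ∀ ⦃x y : FreeAlgebra ℂ (Fin 4)⦄, ym4Rel x y →
    RingQuot.mkAlgHom ℂ sdRel x = RingQuot.mkAlgHom ℂ sdRel y := by
  rintro x y ⟨⟨ν, rfl⟩, rfl⟩
  set f := RingQuot.mkAlgHom ℂ sdRel with hf
  have h1 : f (ι ℂ 0) * f (ι ℂ 1) - f (ι ℂ 1) * f (ι ℂ 0)
      = f (ι ℂ 2) * f (ι ℂ 3) - f (ι ℂ 3) * f (ι ℂ 2) := by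
    have := RingQuot.mkAlgHom_rel ℂ (show sdRel _ _ from Or.inl ⟨rfl, rfl⟩)
    simpa [map_sub, map_mul] using this
  have h2 : f (ι ℂ 0) * f (ι ℂ 2) - f (ι ℂ 2) * f (ι ℂ 0)
      = f (ι ℂ 3) * f (ι ℂ 1) - f (ι ℂ 1) * f (ι ℂ 3) := by
    have := RingQuot.mkAlgHom_rel ℂ (show sdRel _ _ from Or.inr (Or.inl ⟨rfl, rfl⟩))
    simpa [map_sub, map_mul] using this
  have h3 : f (ι ℂ 0) * f (ι ℂ 3) - f (ι ℂ 3) * f (ι ℂ 0)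
      = f (ι ℂ 1) * f (ι ℂ 2) - f (ι ℂ 2) * f (ι ℂ 1) := by
    have := RingQuot.mkAlgHom_rel ℂ (show sdRel _ _ from Or.inr (Or.inr ⟨rfl, rfl⟩))
    simpa [map_sub, map_mul] using this
  rw [map_sum, map_zero]
  fin_cases ν <;>
    simp only [Fin.sum_univ_four, map_sub, map_mul, Fin.isValue]
  · exact ym_key0 _ _ _ _ h1 h2 h3
  · exact ym_key1 _ _ _ _ h1 h2 h3
  · exact ym_key2 _ _ _ _ h1 h2 h3
  · exact ym_key3 _ _ _ _ h1 h2 h3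

/-- there is a surjective ℂ-algebra homomorphism from the
cubic Yang-Mills algebra `A` (`s = 3`, Euclidean metric) onto the quadratic
self-duality algebra `A⁽⁺⁾` sending generators to generators. -/
theorem yang_mills_onto_self_duality :
    ∃ φ : YM4 →ₐ[ℂ] SD, Function.Surjective φ ∧
      ∀ l : Fin 4, φ (RingQuot.mkAlgHom ℂ ym4Rel (ι ℂ l)) =
        RingQuot.mkAlgHom ℂ sdRel (ι ℂ l) := by
  refine ⟨RingQuot.liftAlgHom ℂ ⟨RingQuot.mkAlgHom ℂ sdRel, sd_respects⟩, ?_, ?_⟩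
  · intro z
    obtain ⟨w, rfl⟩ := RingQuot.mkAlgHom_surjective ℂ sdRel z
    exact ⟨RingQuot.mkAlgHom ℂ ym4Rel w,
      RingQuot.liftAlgHom_mkAlgHom_apply ℂ _ _ _⟩
  · intro l
    exact RingQuot.liftAlgHom_mkAlgHom_apply ℂ _ _ _

end
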